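/- arXiv:2205.04443 — 5 statements merged into one kernel-verified Lean document; each statement's English description precedes it below -/
import Mathlib

section
/- Let V be a finite-dimensional real vector space, W ⊂ V a codimension-one subspace, and T : V → V a linear map whose image is contained in W. Let S : W → W be the restriction of T to W. Then S has no real eigenvalues if and only if the only real eigenvalue of T is 0 and it has algebraic multiplicity one. -/
open Polynomial Module Matrix

/-- Evaluating the characteristic polynomial of a matrix gives a determinant. -/
private lemma my_eval_charpoly {n : Type*} [Fintype n] [DecidableEq n] {R : Type*} [CommRing R]
    (M : Matrix n n R) (μ : R) :
    M.charpoly.eval μ = (Matrix.scalar n μ - M).det := by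
  rw [Matrix.charpoly, _root_.eval_det, matPolyEquiv_charmatrix]
  congr 1
  rw [eval_sub, eval_X, eval_C]

/-- Over a field, an endomorphism of a finite-dimensional space has eigenvalue `μ` iff `μ` is a
root of its characteristic polynomial. -/
private lemma my_hasEigenvalue_iff_root_charpoly {V : Type*} [AddCommGroup V] [Module ℝ V]
    [FiniteDimensional ℝ V] (f : Module.End ℝ V) (μ : ℝ) :
    f.HasEigenvalue μ ↔ (LinearMap.charpoly f).IsRoot μ := by
  let b := Module.Free.chooseBasis ℝ V
  rw [Module.End.hasEigenvalue_iff_mem_spectrum,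
    ← AlgEquiv.spectrum_eq (LinearMap.toMatrixAlgEquiv b) f, spectrum.mem_iff]
  have hM : LinearMap.toMatrixAlgEquiv b f = LinearMap.toMatrix b b f := rfl
  rw [hM, ← LinearMap.charpoly_toMatrix f b]
  set M := LinearMap.toMatrix b b f
  rw [IsRoot, my_eval_charpoly]
  have halg : (algebraMap ℝ (Matrix (Module.Free.ChooseBasisIndex ℝ V)
      (Module.Free.ChooseBasisIndex ℝ V) ℝ)) μ = Matrix.scalar _ μ := by
    ext i j
    simp [Matrix.scalar_apply, Matrix.algebraMap_matrix_apply, Matrix.diagonal_apply]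
  rw [halg, Matrix.isUnit_iff_isUnit_det, isUnit_iff_ne_zero, not_ne_iff]


private lemma my_charpoly_zero_one {n : ℕ} (h : n = 1) :
    (0 : Matrix (Fin n) (Fin n) ℝ).charpoly = X := by
  subst h
  rw [Matrix.charpoly, Matrix.det_fin_one]
  simp

private lemma my_charpoly_factor {V : Type*} [AddCommGroup V] [Module ℝ V]
    [FiniteDimensional ℝ V]
    (W : Submodule ℝ V) (hW : Module.finrank ℝ W + 1 = Module.finrank ℝ V)
    (T : V →ₗ[ℝ] V) (hT : ∀ x : V, T x ∈ W) :
    LinearMap.charpoly T = LinearMap.charpoly (T.restrict (fun x _ => hT x)) * X := by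
  obtain ⟨W', hc⟩ := Submodule.exists_isCompl W
  have hfr : Module.finrank ℝ W + Module.finrank ℝ W' = Module.finrank ℝ V :=
    Submodule.finrank_add_eq_of_isCompl hc
  have hW' : Module.finrank ℝ W' = 1 := by omega
  set S := T.restrict (fun x _ => hT x) with hSdef
  set e := Submodule.prodEquivOfIsCompl W W' hc with he
  set bW := Module.finBasis ℝ W with hbW
  set bW' := Module.finBasis ℝ W' with hbW'
  set b : Basis (Fin (Module.finrank ℝ W) ⊕ Fin (Module.finrank ℝ W')) ℝ V :=
    (bW.prod bW').map e with hb
  rw [← LinearMap.charpoly_toMatrix T b, ← LinearMap.charpoly_toMatrix S bW]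
  set M := LinearMap.toMatrix b b T with hM
  have hsymm : ∀ (v : V) (hv : v ∈ W), e.symm v = ((⟨v, hv⟩ : W), (0 : W')) := by
    intro v hv
    apply (LinearEquiv.symm_apply_eq _).2
    simp [he, Submodule.coe_prodEquivOfIsCompl']
  have hrepr : ∀ (x : V), b.repr x = (bW.prod bW').repr (e.symm x) := by
    intro x
    rw [hb, Basis.map_repr]
    rfl
  have hrow : ∀ (i : Fin (Module.finrank ℝ W')) (j), M (Sum.inr i) j = 0 := by
    intro i j
    rw [hM, LinearMap.toMatrix_apply, hrepr, hsymm _ (hT _), Basis.prod_repr_inr]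
    simp
  have hblock : ∀ (i j : Fin (Module.finrank ℝ W)),
      M (Sum.inl i) (Sum.inl j) = LinearMap.toMatrix bW bW S i j := by
    intro i j
    rw [hM, LinearMap.toMatrix_apply, LinearMap.toMatrix_apply, hrepr]
    have hbj : b (Sum.inl j) = (bW j : V) := by
      rw [hb, Basis.map_apply, Basis.prod_apply]
      simp [he, Submodule.coe_prodEquivOfIsCompl']
    rw [hbj, hsymm _ (hT _), Basis.prod_repr_inl]
    congr 1
  have key : M = Matrix.fromBlocks (LinearMap.toMatrix bW bW S) (M.toBlocks₁₂) 0 0 := by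
    ext (i | i) (j | j)
    · rw [hblock]; rfl
    · rfl
    · simpa using hrow i (Sum.inl j)
    · simpa using hrow i (Sum.inr j)
  rw [key, Matrix.charpoly_fromBlocks_zero₂₁, my_charpoly_zero_one hW']

/-- Let `W ⊂ V` be a codimension-one subspace of a finite-dimensional real vector space and
`T : V → V` a linear map whose image is contained in `W`, with restriction `S : W → W`.
Then `S` has no real eigenvalues iff the only real eigenvalue of `T` is `0` and it has
algebraic multiplicity one. -/
theorem restriction_no_real_eigenvalues_iff
    (V : Type*) [AddCommGroup V] [Module ℝ V] [FiniteDimensional ℝ V]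
    (W : Submodule ℝ V) (hW : Module.finrank ℝ W + 1 = Module.finrank ℝ V)
    (T : V →ₗ[ℝ] V) (hT : ∀ x : V, T x ∈ W) :
    (∀ μ : ℝ, ¬ Module.End.HasEigenvalue (T.restrict (fun x _ => hT x)) μ) ↔
      ((∀ μ : ℝ, Module.End.HasEigenvalue T μ ↔ μ = 0) ∧
        (LinearMap.charpoly T).rootMultiplicity 0 = 1) := by
  set S := T.restrict (fun x _ => hT x) with hS
  have hfac : LinearMap.charpoly T = LinearMap.charpoly S * X := my_charpoly_factor W hW T hT
  have hS0 : LinearMap.charpoly S ≠ 0 := (LinearMap.charpoly_monic S).ne_zero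
  have hmulne : LinearMap.charpoly S * X ≠ 0 := mul_ne_zero hS0 X_ne_zero
  have hX : rootMultiplicity (0 : ℝ) (X : ℝ[X]) = 1 := by
    simpa using (rootMultiplicity_X_sub_C_self (R := ℝ) (x := 0))
  constructor
  · intro h
    have hnr : ∀ μ : ℝ, ¬ (LinearMap.charpoly S).IsRoot μ := fun μ hr =>
      h μ ((my_hasEigenvalue_iff_root_charpoly S μ).2 hr)
    constructor
    · intro μ
      rw [my_hasEigenvalue_iff_root_charpoly, hfac, IsRoot, eval_mul, eval_X, mul_eq_zero]
      constructor
      · rintro (h1 | h1)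
        · exact absurd h1 (hnr μ)
        · exact h1
      · rintro rfl
        right
        rfl
    · rw [hfac, rootMultiplicity_mul hmulne, rootMultiplicity_eq_zero (hnr 0), hX]
  · rintro ⟨h1, h2⟩ μ hev
    have hr : (LinearMap.charpoly S).IsRoot μ := (my_hasEigenvalue_iff_root_charpoly S μ).1 hev
    have hT' : Module.End.HasEigenvalue T μ := by
      rw [my_hasEigenvalue_iff_root_charpoly, hfac, IsRoot, eval_mul, hr.eq_zero, zero_mul]
    have hμ : μ = 0 := (h1 μ).1 hT'
    rw [hfac, rootMultiplicity_mul hmulne, hX] at h2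
    have : 0 < (LinearMap.charpoly S).rootMultiplicity 0 :=
      (rootMultiplicity_pos hS0).2 (hμ ▸ hr)
    omega
end

section
/- Let V be a finite-dimensional real vector space, W ⊂ V a codimension-one subspace, T : V → V a linear map with image contained in W, and S = T|_W : W → W. Then 0 is an eigenvalue of S if and only if 0 is an eigenvalue of T with algebraic multiplicity at least two. -/
open Module LinearMap Polynomial

/-- Let `W ⊂ V` be a codimension-one subspace of a finite-dimensional real vector space and
`T : V → V` a linear map whose image is contained in `W`, with restriction `S : W → W`.
Then `0` is an eigenvalue of `S` iff `0` is an eigenvalue of `T` with algebraic multiplicity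
at least two. -/
theorem restriction_hasEigenvalue_zero_iff
    (V : Type*) [AddCommGroup V] [Module ℝ V] [FiniteDimensional ℝ V]
    (W : Submodule ℝ V) (hW : Module.finrank ℝ W + 1 = Module.finrank ℝ V)
    (T : V →ₗ[ℝ] V) (hT : ∀ x : V, T x ∈ W) :
    Module.End.HasEigenvalue (T.restrict (fun x _ => hT x)) 0 ↔
      (Module.End.HasEigenvalue T 0 ∧ 2 ≤ (LinearMap.charpoly T).rootMultiplicity 0) := by
  have hrange : LinearMap.range T ≤ W := by rintro _ ⟨x, rfl⟩; exact hT x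
  have hrn := LinearMap.finrank_range_add_finrank_ker T
  have hrW : Module.finrank ℝ (LinearMap.range T) ≤ Module.finrank ℝ W :=
    Submodule.finrank_mono hrange
  -- `T` always has eigenvalue 0
  have hker : LinearMap.ker T ≠ ⊥ := by
    intro h
    rw [h, finrank_bot] at hrn
    omega
  have hkerpos : 1 ≤ Module.finrank ℝ (LinearMap.ker T) := by
    rcases Nat.eq_zero_or_pos (Module.finrank ℝ (LinearMap.ker T)) with h | h
    · exact absurd (Submodule.finrank_eq_zero.mp h) hker
    · exact h
  have hEig : Module.End.HasEigenvalue T 0 := by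
    rw [Module.End.hasEigenvalue_iff, Module.End.eigenspace_zero]
    exact hker
  -- multiplicity = dimension of generalized eigenspace
  have hmult : (LinearMap.charpoly T).rootMultiplicity 0
      = Module.finrank ℝ (Module.End.maxGenEigenspace T 0) := by
    rw [Polynomial.rootMultiplicity_eq_natTrailingDegree',
      LinearMap.finrank_maxGenEigenspace_zero_eq]
  -- powers' kernels sit inside the generalized eigenspace
  have hkle : ∀ k : ℕ, LinearMap.ker (T ^ k) ≤ Module.End.maxGenEigenspace T 0 := by
    intro k x hx
    rw [Module.End.mem_maxGenEigenspace]
    exact ⟨k, by simpa using hx⟩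
  -- eigenvalue of the restriction ↔ a nonzero vector of `W` killed by `T`
  have hrestr : Module.End.HasEigenvalue (T.restrict (fun x _ => hT x)) 0 ↔
      ∃ x : V, x ∈ W ∧ x ≠ 0 ∧ T x = 0 := by
    rw [Module.End.hasEigenvalue_iff, Module.End.eigenspace_zero, Submodule.ne_bot_iff]
    constructor
    · rintro ⟨⟨x, hxW⟩, hx0, hx⟩
      refine ⟨x, hxW, by simpa using hx, ?_⟩
      have := congrArg (Subtype.val) hx0
      simpa [LinearMap.restrict_apply] using this
    · rintro ⟨x, hxW, hx0, hx⟩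
      refine ⟨⟨x, hxW⟩, ?_, by simpa using hx0⟩
      rw [LinearMap.mem_ker]
      ext
      simpa [LinearMap.restrict_apply] using hx
  rw [hrestr, hmult]
  constructor
  · rintro ⟨x, hxW, hx0, hx⟩
    refine ⟨hEig, ?_⟩
    by_cases h2 : 2 ≤ Module.finrank ℝ (LinearMap.ker T)
    · calc 2 ≤ Module.finrank ℝ (LinearMap.ker T) := h2
        _ = Module.finrank ℝ (LinearMap.ker (T ^ 1)) := by rw [pow_one]
        _ ≤ _ := Submodule.finrank_mono (hkle 1)
    · -- ker T is one-dimensional, so range T = W and x = T y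
      have hk1 : Module.finrank ℝ (LinearMap.ker T) = 1 := le_antisymm (by omega) hkerpos
      have hWr : LinearMap.range T = W := by
        refine Submodule.eq_of_le_of_finrank_le hrange ?_
        omega
      have hxr : x ∈ LinearMap.range T := hWr ▸ hxW
      obtain ⟨y, hy⟩ := hxr
      have hlt : LinearMap.ker T < LinearMap.ker (T ^ 2) := by
        refine lt_of_le_of_ne (fun z hz => ?_) (fun h => ?_)
        · rw [LinearMap.mem_ker] at hz ⊢
          rw [pow_two]
          simp [hz]
        · have hy2 : y ∈ LinearMap.ker (T ^ 2) := by
            rw [LinearMap.mem_ker, pow_two]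
            simp [hy, hx]
          rw [← h, LinearMap.mem_ker, hy] at hy2
          exact hx0 hy2
      have := Submodule.finrank_lt_finrank_of_lt hlt
      have := Submodule.finrank_mono (hkle 2)
      omega
  · rintro ⟨-, h2⟩
    by_cases hy : ∃ y : V, T (T y) = 0 ∧ T y ≠ 0
    · obtain ⟨y, hy1, hy2⟩ := hy
      exact ⟨T y, hT y, hy2, hy1⟩
    · -- then ker T² = ker T, so the generalized eigenspace is ker T, which has dim ≥ 2
      push_neg at hy
      have hle : Module.End.maxGenEigenspace T 0 ≤ LinearMap.ker T := by
        have key : ∀ (k : ℕ) (z : V), (T ^ k) z = 0 → T z = 0 := by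
          intro k
          induction k with
          | zero => intro z hz; simp at hz; simp [hz]
          | succ n ih =>
            intro z hz
            rw [pow_succ] at hz
            simp only [Module.End.mul_apply] at hz
            exact hy z (ih (T z) hz)
        intro z hz
        rw [Module.End.mem_maxGenEigenspace] at hz
        obtain ⟨k, hk⟩ := hz
        simp only [zero_smul, sub_zero] at hk
        exact LinearMap.mem_ker.mpr (key k z hk)
      have hk2 : 2 ≤ Module.finrank ℝ (LinearMap.ker T) :=
        h2.trans (Submodule.finrank_mono hle)
      -- ker T ∩ W is nontrivial by dimension count
      have hdim := Submodule.finrank_sup_add_finrank_inf_eq (LinearMap.ker T) W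
      have hsup : Module.finrank ℝ ↥(LinearMap.ker T ⊔ W) ≤ Module.finrank ℝ V :=
        Submodule.finrank_le _
      have hint : LinearMap.ker T ⊓ W ≠ ⊥ := by
        intro h
        rw [h, finrank_bot] at hdim
        omega
      obtain ⟨z, hz, hz0⟩ := Submodule.ne_bot_iff _ |>.mp hint
      exact ⟨z, hz.2, hz0, LinearMap.mem_ker.mp hz.1⟩
end

section
/- Let v(x,y,z) = (x²−y²−z²+1, 2xy+2z, 2xz−2y)/(x²+y²+z²+1) on ℝ³. Then v is invariant under rotations about the x-axis: for every rotation R of ℝ³ fixing the x-axis, v(R p) = R(v(p)) for all p ∈ ℝ³. -/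
/-- The point `(a,b,c)` of Euclidean 3-space. -/
noncomputable def pt3 (a b c : ℝ) : EuclideanSpace ℝ (Fin 3) :=
  (WithLp.equiv 2 (Fin 3 → ℝ)).symm ![a, b, c]

/-- The stereographic projection of the Hopf vector field:
`v(x,y,z) = (x²−y²−z²+1, 2xy+2z, 2xz−2y)/(x²+y²+z²+1)`. -/
noncomputable def hopfField (p : EuclideanSpace ℝ (Fin 3)) : EuclideanSpace ℝ (Fin 3) :=
  ((p 0) ^ 2 + (p 1) ^ 2 + (p 2) ^ 2 + 1)⁻¹ •
    pt3 ((p 0) ^ 2 - (p 1) ^ 2 - (p 2) ^ 2 + 1)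
      (2 * p 0 * p 1 + 2 * p 2)
      (2 * p 0 * p 2 - 2 * p 1)

/-- Rotation by angle `θ` about the `x`-axis:
`(x,y,z) ↦ (x, y cos θ − z sin θ, y sin θ + z cos θ)`. -/
noncomputable def rotX (θ : ℝ) (p : EuclideanSpace ℝ (Fin 3)) : EuclideanSpace ℝ (Fin 3) :=
  pt3 (p 0) (p 1 * Real.cos θ - p 2 * Real.sin θ) (p 1 * Real.sin θ + p 2 * Real.cos θ)

/-- The stereographically projected Hopf field is invariant under every rotation about the
`x`-axis. -/
theorem hopfField_rotX_invariant (θ : ℝ) (p : EuclideanSpace ℝ (Fin 3)) :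
    hopfField (rotX θ p) = rotX θ (hopfField p) := by
  have hpy : Real.sin θ ^ 2 + Real.cos θ ^ 2 = 1 := Real.sin_sq_add_cos_sq θ
  have hne : (p 0) ^ 2 + (p 1) ^ 2 + (p 2) ^ 2 + 1 ≠ 0 := by positivity
  ext i
  fin_cases i <;>
    simp only [hopfField, rotX, pt3, WithLp.equiv_symm_apply, PiLp.toLp_apply, PiLp.smul_apply,
      Matrix.cons_val_zero, Matrix.cons_val_one, Matrix.head_cons, Matrix.cons_val_two,
      Matrix.tail_cons, smul_eq_mul, Fin.zero_eta, Fin.mk_one, Fin.isValue, Fin.reduceFinMk] <;>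
    field_simp
  · linear_combination (-2*((p 1)^2+(p 2)^2)*((p 0)^2+1)) * hpy
  · linear_combination (1/2) * (-((p 1)^2+(p 2)^2)*((2*p 0*p 1+2*p 2)*Real.cos θ - (2*p 0*p 2 - 2*p 1)*Real.sin θ)) * hpy
  · linear_combination (1/2) * (-((p 1)^2+(p 2)^2)*((2*p 0*p 1+2*p 2)*Real.sin θ + (2*p 0*p 2 - 2*p 1)*Real.cos θ)) * hpy
end

section
/- Let v(x,y,z) = (x²−y²−z²+1, 2xy+2z, 2xz−2y)/(x²+y²+z²+1) on ℝ³. Then the Jacobian matrix Dv at a point (x,y,0) equals 2/(1+x²+y²)² times the matrix A with rows (2xy², −2y(1+x²), 0), (y(1−x²+y²), x(1+x²−y²), 1+x²+y²), (2xy, −(1+x²−y²), x(1+x²+y²)), and the eigenvalues of A are 0 and (1+x²+y²)(x ± i); in particular, 0 is the only real eigenvalue of Dv at (x,y,0). -/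
local notation "E3" => EuclideanSpace ℝ (Fin 3)

open Polynomial in
theorem hopfAux_charpoly (x y : ℝ) :
    (Matrix.charpoly
        ((!![2 * x * y ^ 2, -2 * y * (1 + x ^ 2), 0;
             y * (1 - x ^ 2 + y ^ 2), x * (1 + x ^ 2 - y ^ 2), 1 + x ^ 2 + y ^ 2;
             2 * x * y, -(1 + x ^ 2 - y ^ 2), x * (1 + x ^ 2 + y ^ 2)]).map
          (Complex.ofReal)) =
      X * (X - C (((1 : ℂ) + x ^ 2 + y ^ 2) * (x + Complex.I))) *
        (X - C (((1 : ℂ) + x ^ 2 + y ^ 2) * (x - Complex.I)))) := by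
  have hI : (C Complex.I) * C Complex.I = (-1 : ℂ[X]) := by
    rw [← map_mul, Complex.I_mul_I, map_neg, map_one]
  simp only [Matrix.charpoly, Matrix.charmatrix, Matrix.det_fin_three, Matrix.map_apply,
    Matrix.cons_val', Matrix.cons_val_zero, Matrix.cons_val_one, Matrix.head_cons,
    Matrix.empty_val', Matrix.cons_val_fin_one, Matrix.head_fin_const, Matrix.of_apply,
    Matrix.cons_val_two, Matrix.tail_cons,
    RingHom.mapMatrix_apply, Matrix.sub_apply, Matrix.smul_apply, Matrix.one_apply_eq,
    Matrix.one_apply_ne, Matrix.scalar_apply, Matrix.diagonal_apply, smul_eq_mul]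
  norm_num [Matrix.one_apply]
  push_cast
  simp only [map_add, map_mul, map_sub, map_neg, map_pow, map_one, map_ofNat]
  ring_nf
  linear_combination ((1 + C (x:ℂ)^2 + C (y:ℂ)^2)^2 * X) * hI

theorem hopfAux_jac (x y : ℝ) (u : E3) (i : Fin 3) :
      fderiv ℝ hopfField (pt3 x y 0) u i =
        (2 / (1 + x ^ 2 + y ^ 2) ^ 2) *
          (Matrix.mulVec
            !![2 * x * y ^ 2, -2 * y * (1 + x ^ 2), 0;
               y * (1 - x ^ 2 + y ^ 2), x * (1 + x ^ 2 - y ^ 2), 1 + x ^ 2 + y ^ 2;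
               2 * x * y, -(1 + x ^ 2 - y ^ 2), x * (1 + x ^ 2 + y ^ 2)]
            (fun j => u j)) i := by
  set p₀ : E3 := pt3 x y 0 with hp₀
  have hv0 : p₀ 0 = x := by simp [hp₀, pt3]
  have hv1 : p₀ 1 = y := by simp [hp₀, pt3]
  have hv2 : p₀ 2 = 0 := by simp [hp₀, pt3]
  have h0 : HasFDerivAt (fun q : E3 => q 0)
      (EuclideanSpace.proj 0 : E3 →L[ℝ] ℝ) p₀ := (EuclideanSpace.proj 0 : E3 →L[ℝ] ℝ).hasFDerivAt
  have h1 : HasFDerivAt (fun q : E3 => q 1)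
      (EuclideanSpace.proj 1 : E3 →L[ℝ] ℝ) p₀ := (EuclideanSpace.proj 1 : E3 →L[ℝ] ℝ).hasFDerivAt
  have h2 : HasFDerivAt (fun q : E3 => q 2)
      (EuclideanSpace.proj 2 : E3 →L[ℝ] ℝ) p₀ := (EuclideanSpace.proj 2 : E3 →L[ℝ] ℝ).hasFDerivAt
  have h0sq : HasFDerivAt (fun q : E3 => q 0 ^ 2)
      ((2 * p₀ 0) • (EuclideanSpace.proj 0 : E3 →L[ℝ] ℝ)) p₀ := by
    simpa [pow_two, two_mul, add_smul, Pi.mul_def] using h0.mul h0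
  have h1sq : HasFDerivAt (fun q : E3 => q 1 ^ 2)
      ((2 * p₀ 1) • (EuclideanSpace.proj 1 : E3 →L[ℝ] ℝ)) p₀ := by
    simpa [pow_two, two_mul, add_smul, Pi.mul_def] using h1.mul h1
  have h2sq : HasFDerivAt (fun q : E3 => q 2 ^ 2)
      ((2 * p₀ 2) • (EuclideanSpace.proj 2 : E3 →L[ℝ] ℝ)) p₀ := by
    simpa [pow_two, two_mul, add_smul, Pi.mul_def] using h2.mul h2
  have hr := ((h0sq.add h1sq).add h2sq).add_const 1
  have hrne : (fun q : E3 => q 0 ^ 2 + q 1 ^ 2 + q 2 ^ 2 + 1) p₀ ≠ 0 := by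
    simp only [hv0, hv1, hv2]; positivity
  have hrinv : HasFDerivAt (fun q : E3 => (q 0 ^ 2 + q 1 ^ 2 + q 2 ^ 2 + 1)⁻¹)
      ((-(((p₀ 0 : ℝ) ^ 2 + p₀ 1 ^ 2 + p₀ 2 ^ 2 + 1) ^ 2)⁻¹) •
        ((2 * p₀ 0) • (EuclideanSpace.proj 0 : E3 →L[ℝ] ℝ) +
          (2 * p₀ 1) • (EuclideanSpace.proj 1 : E3 →L[ℝ] ℝ) +
          (2 * p₀ 2) • (EuclideanSpace.proj 2 : E3 →L[ℝ] ℝ))) p₀ :=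
    (hasDerivAt_inv hrne).comp_hasFDerivAt p₀ hr
  have hN0 := ((h0sq.sub h1sq).sub h2sq).add_const 1
  have hN1 := ((h0.const_mul 2).mul h1).add (h2.const_mul 2)
  have hN2 := ((h0.const_mul 2).mul h2).sub (h1.const_mul 2)
  have hg0 := hrinv.mul hN0
  have hg1 := hrinv.mul hN1
  have hg2 := hrinv.mul hN2
  simp only [Pi.mul_def, Pi.add_def, Pi.sub_def] at hg0 hg1 hg2
  -- differentiability of hopfField
  have hW : DifferentiableAt ℝ
      (fun q : E3 => pt3 (q 0 ^ 2 - q 1 ^ 2 - q 2 ^ 2 + 1)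
        (2 * q 0 * q 1 + 2 * q 2) (2 * q 0 * q 2 - 2 * q 1)) p₀ := by
    have hpi : DifferentiableAt ℝ
        (fun q : E3 => (![q 0 ^ 2 - q 1 ^ 2 - q 2 ^ 2 + 1,
          2 * q 0 * q 1 + 2 * q 2, 2 * q 0 * q 2 - 2 * q 1] : Fin 3 → ℝ)) p₀ := by
      apply differentiableAt_pi.mpr
      intro i
      fin_cases i
      · exact hN0.differentiableAt
      · exact hN1.differentiableAt
      · exact hN2.differentiableAt
    exact ((PiLp.continuousLinearEquiv 2 ℝ (fun _ : Fin 3 => ℝ)).symm.differentiableAt).comp p₀ hpi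
  have hdiff : DifferentiableAt ℝ hopfField p₀ := by
    have := hrinv.differentiableAt.smul hW
    exact this
  have hswap : ∀ i : Fin 3, fderiv ℝ hopfField p₀ u i =
      fderiv ℝ (fun q => hopfField q i) p₀ u := by
    intro i
    have hcomp := fderiv_comp (𝕜 := ℝ) p₀
      ((EuclideanSpace.proj i : E3 →L[ℝ] ℝ).differentiableAt) hdiff
    have : (fun q => hopfField q i) =
        (EuclideanSpace.proj i : E3 →L[ℝ] ℝ) ∘ hopfField := rfl
    rw [this, hcomp, ContinuousLinearMap.fderiv]
    simp
  rw [hswap]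
  have hcg0 : (fun q : E3 => hopfField q 0) =
      fun q : E3 => (q 0 ^ 2 + q 1 ^ 2 + q 2 ^ 2 + 1)⁻¹ *
        (q 0 ^ 2 - q 1 ^ 2 - q 2 ^ 2 + 1) := by
    funext q; simp [hopfField, pt3]
  have hcg1 : (fun q : E3 => hopfField q 1) =
      fun q : E3 => (q 0 ^ 2 + q 1 ^ 2 + q 2 ^ 2 + 1)⁻¹ *
        (2 * q 0 * q 1 + 2 * q 2) := by
    funext q; simp [hopfField, pt3]
  have hcg2 : (fun q : E3 => hopfField q 2) =
      fun q : E3 => (q 0 ^ 2 + q 1 ^ 2 + q 2 ^ 2 + 1)⁻¹ *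
        (2 * q 0 * q 2 - 2 * q 1) := by
    funext q; simp [hopfField, pt3]
  have hs : (1 : ℝ) + x ^ 2 + y ^ 2 ≠ 0 := by positivity
  fin_cases i
  · show fderiv ℝ (fun q => hopfField q 0) p₀ u = _
    rw [hcg0, hg0.fderiv]
    simp only [ContinuousLinearMap.add_apply, ContinuousLinearMap.coe_smul',
      Pi.smul_apply, ContinuousLinearMap.sub_apply, ContinuousLinearMap.smul_apply,
      PiLp.proj_apply, smul_eq_mul, hv0, hv1, hv2,
      Matrix.mulVec, dotProduct, Fin.sum_univ_three,
      Matrix.cons_val', Matrix.cons_val_zero, Matrix.cons_val_one, Matrix.head_cons,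
      Matrix.empty_val', Matrix.cons_val_fin_one, Matrix.cons_val_two, Matrix.tail_cons,
      Fin.zero_eta, Fin.mk_one, Fin.reduceFinMk, Fin.isValue, Matrix.of_apply, Matrix.cons_val]
    field_simp
    ring
  · show fderiv ℝ (fun q => hopfField q 1) p₀ u = _
    rw [hcg1, hg1.fderiv]
    simp only [ContinuousLinearMap.add_apply, ContinuousLinearMap.coe_smul',
      Pi.smul_apply, ContinuousLinearMap.sub_apply, ContinuousLinearMap.smul_apply,
      PiLp.proj_apply, smul_eq_mul, hv0, hv1, hv2,
      Matrix.mulVec, dotProduct, Fin.sum_univ_three,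
      Matrix.cons_val', Matrix.cons_val_zero, Matrix.cons_val_one, Matrix.head_cons,
      Matrix.empty_val', Matrix.cons_val_fin_one, Matrix.cons_val_two, Matrix.tail_cons,
      Fin.zero_eta, Fin.mk_one, Fin.reduceFinMk, Fin.isValue, Matrix.of_apply, Matrix.cons_val]
    field_simp
    ring
  · show fderiv ℝ (fun q => hopfField q 2) p₀ u = _
    rw [hcg2, hg2.fderiv]
    simp only [ContinuousLinearMap.add_apply, ContinuousLinearMap.coe_smul',
      Pi.smul_apply, ContinuousLinearMap.sub_apply, ContinuousLinearMap.smul_apply,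
      PiLp.proj_apply, smul_eq_mul, hv0, hv1, hv2,
      Matrix.mulVec, dotProduct, Fin.sum_univ_three,
      Matrix.cons_val', Matrix.cons_val_zero, Matrix.cons_val_one, Matrix.head_cons,
      Matrix.empty_val', Matrix.cons_val_fin_one, Matrix.cons_val_two, Matrix.tail_cons,
      Fin.zero_eta, Fin.mk_one, Fin.reduceFinMk, Fin.isValue, Matrix.of_apply, Matrix.cons_val, Matrix.vecHead]
    field_simp
    ring


theorem hopfAux_eig (x y : ℝ) (μ : ℝ) :
      Module.End.HasEigenvalue
        (↑(fderiv ℝ hopfField (pt3 x y 0)) :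
          EuclideanSpace ℝ (Fin 3) →ₗ[ℝ] EuclideanSpace ℝ (Fin 3)) μ ↔ μ = 0 := by
  set A : Matrix (Fin 3) (Fin 3) ℝ :=
    !![2 * x * y ^ 2, -2 * y * (1 + x ^ 2), 0;
       y * (1 - x ^ 2 + y ^ 2), x * (1 + x ^ 2 - y ^ 2), 1 + x ^ 2 + y ^ 2;
       2 * x * y, -(1 + x ^ 2 - y ^ 2), x * (1 + x ^ 2 + y ^ 2)] with hA
  set s : ℝ := 1 + x ^ 2 + y ^ 2 with hsdef
  have hs : s ≠ 0 := by positivity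
  constructor
  · intro h
    obtain ⟨v, hv⟩ := h.exists_hasEigenvector
    have hv0 : v ≠ 0 := hv.right
    have hfv : ∀ i : Fin 3, (2 / s ^ 2) * (A.mulVec (fun j => v j)) i = μ * v i := by
      intro i
      have h1 := hopfAux_jac x y v i
      have h2 : fderiv ℝ hopfField (pt3 x y 0) v = μ • v := hv.apply_eq_smul
      rw [← h1, h2]
      simp [PiLp.smul_apply]
    set ν : ℝ := μ * s ^ 2 / 2 with hν
    have hMv : (A - ν • 1).mulVec (fun j => v j) = 0 := by
      funext i
      have := hfv i
      simp only [Matrix.sub_mulVec, Matrix.smul_mulVec, Matrix.one_mulVec,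
        Pi.sub_apply, Pi.smul_apply, Pi.zero_apply, smul_eq_mul]
      have hs2 : (s:ℝ) ^ 2 ≠ 0 := pow_ne_zero _ hs
      have h3 : A.mulVec (fun j => v j) i = ν * v i := by
        rw [hν, show A.mulVec (fun j => v j) i = s ^ 2 / 2 * (2 / s ^ 2 * A.mulVec (fun j => v j) i) by field_simp, this]; ring
      linear_combination h3
    have hvne : (fun j => v j) ≠ 0 := by
      intro hcon
      apply hv0
      ext j
      exact congrFun hcon j
    have hdet : (A - ν • 1).det = 0 := by
      rw [← Matrix.exists_mulVec_eq_zero_iff]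
      exact ⟨_, hvne, hMv⟩
    have hkey : ν * ((ν - x * s) ^ 2 + s ^ 2) = 0 := by
      rw [hA] at hdet
      simp only [Matrix.det_fin_three, Matrix.sub_apply, Matrix.smul_apply,
        Matrix.one_apply_eq, Matrix.one_apply_ne, Matrix.cons_val', Matrix.cons_val_zero,
        Matrix.cons_val_one, Matrix.head_cons, Matrix.empty_val', Matrix.cons_val_fin_one,
        Matrix.cons_val_two, Matrix.tail_cons, smul_eq_mul, Matrix.one_apply, Matrix.cons_val, Matrix.of_apply] at hdet
      norm_num [Fin.ext_iff] at hdet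
      linear_combination -hdet
    have hpos : ((ν - x * s) ^ 2 + s ^ 2) > 0 := by positivity
    have : ν = 0 := by
      rcases mul_eq_zero.mp hkey with h | h
      · exact h
      · exact absurd h (ne_of_gt hpos)
    have hs2 : (s:ℝ) ^ 2 ≠ 0 := pow_ne_zero _ hs
    rw [hν, div_eq_zero_iff, or_iff_left two_ne_zero] at this
    exact (mul_eq_zero.mp this).resolve_right hs2
  · rintro rfl
    set w : E3 := pt3 (1 + x ^ 2) (x * y) (-y) with hw
    have hwc : (fun j => w j) = ![1 + x ^ 2, x * y, -y] := by
      funext j; fin_cases j <;> simp [hw, pt3]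
    have hfw : fderiv ℝ hopfField (pt3 x y 0) w = 0 := by
      ext i
      rw [hopfAux_jac x y w i, hwc]
      fin_cases i <;>
        · show _ = (0 : (Fin 3) → ℝ) _
          simp only [Pi.zero_apply]
          apply mul_eq_zero_of_right
          simp [hA, Matrix.mulVec, dotProduct, Fin.sum_univ_three]
          ring_nf
    apply Module.End.hasEigenvalue_of_hasEigenvector (x := w)
    constructor
    · rw [Module.End.mem_eigenspace_iff]
      simpa using hfw
    · intro hcon
      have h1 : w 0 = 0 := by rw [hcon]; rfl
      have h2 : w 0 = 1 + x ^ 2 := by simp [hw, pt3]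
      nlinarith [h2 ▸ h1]

open Polynomial in
/-- At a point `(x,y,0)` the Jacobian of the stereographically projected Hopf field equals
`2/(1+x²+y²)²` times the matrix `A` below, the eigenvalues of `A` over `ℂ` are `0` and
`(1+x²+y²)(x ± i)`, and in particular `0` is the only real eigenvalue of the Jacobian. -/
theorem hopfField_jacobian_eigenvalues (x y : ℝ) :
    (∀ u : EuclideanSpace ℝ (Fin 3), ∀ i : Fin 3,
      fderiv ℝ hopfField (pt3 x y 0) u i =
        (2 / (1 + x ^ 2 + y ^ 2) ^ 2) *
          (Matrix.mulVec
            !![2 * x * y ^ 2, -2 * y * (1 + x ^ 2), 0;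
               y * (1 - x ^ 2 + y ^ 2), x * (1 + x ^ 2 - y ^ 2), 1 + x ^ 2 + y ^ 2;
               2 * x * y, -(1 + x ^ 2 - y ^ 2), x * (1 + x ^ 2 + y ^ 2)]
            (fun j => u j)) i) ∧
    (Matrix.charpoly
        ((!![2 * x * y ^ 2, -2 * y * (1 + x ^ 2), 0;
             y * (1 - x ^ 2 + y ^ 2), x * (1 + x ^ 2 - y ^ 2), 1 + x ^ 2 + y ^ 2;
             2 * x * y, -(1 + x ^ 2 - y ^ 2), x * (1 + x ^ 2 + y ^ 2)]).map
          (Complex.ofReal)) =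
      X * (X - C (((1 : ℂ) + x ^ 2 + y ^ 2) * (x + Complex.I))) *
        (X - C (((1 : ℂ) + x ^ 2 + y ^ 2) * (x - Complex.I)))) ∧
    (∀ μ : ℝ,
      Module.End.HasEigenvalue
        (↑(fderiv ℝ hopfField (pt3 x y 0)) :
          EuclideanSpace ℝ (Fin 3) →ₗ[ℝ] EuclideanSpace ℝ (Fin 3)) μ ↔ μ = 0) :=
  ⟨fun u i => hopfAux_jac x y u i, hopfAux_charpoly x y, fun μ => hopfAux_eig x y μ⟩
end

section
/- Let v(x,y,z) = (x²−y²−z²+1, 2xy+2z, 2xz−2y)/(x²+y²+z²+1) on ℝ³ and let 0 < h < 1, r = √(1−h²). Define the billiard map on points where it is given by B_h(q) = q + 2r·v((id − r·v)^{-1}(q)). Then B_h(x,0,0) = (x + 2√(1−h²), 0, 0) for all x ∈ ℝ, and consequently B_h^m(x,0,0) = (x + 2m√(1−h²), 0, 0) for all m ∈ ℕ. In particular the orbit of (x,0,0) under B_h is unbounded. -/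
/-- The outer billiard map on the horosphere at height `h`, with `r = √(1−h²)`:
`B_h(q) = q + 2r·v((id − r·v)⁻¹(q))`. -/
noncomputable def billiard (r : ℝ) (q : EuclideanSpace ℝ (Fin 3)) : EuclideanSpace ℝ (Fin 3) :=
  q + (2 * r) • hopfField (Function.invFun (fun p => p - r • hopfField p) q)

lemma pt3_apply (a b c : ℝ) : (pt3 a b c) 0 = a ∧ (pt3 a b c) 1 = b ∧ (pt3 a b c) 2 = c := by
  refine ⟨?_, ?_, ?_⟩ <;> simp [pt3]

lemma hopf_axis (a : ℝ) : hopfField (pt3 a 0 0) = pt3 1 0 0 := by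
  have ha : (a ^ 2 + 1 : ℝ) ≠ 0 := by positivity
  ext i
  fin_cases i <;>
    simp [hopfField, pt3, PiLp.smul_apply] <;>
    field_simp

lemma key (r : ℝ) (hr : r ^ 2 < 1) (x : ℝ) (p : EuclideanSpace ℝ (Fin 3))
    (hp : p - r • hopfField p = pt3 x 0 0) : hopfField p = pt3 1 0 0 := by
  set a := p 0 with hA
  set b := p 1 with hB
  set c := p 2 with hC
  have hD : (a ^ 2 + b ^ 2 + c ^ 2 + 1 : ℝ) ≠ 0 := by positivity
  have e2 : b - r * ((a ^ 2 + b ^ 2 + c ^ 2 + 1)⁻¹ * (2 * a * b + 2 * c)) = 0 := by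
    have := congrFun (congrArg WithLp.ofLp hp) 1
    simpa [hopfField, pt3, PiLp.smul_apply, PiLp.sub_apply] using this
  have e3 : c - r * ((a ^ 2 + b ^ 2 + c ^ 2 + 1)⁻¹ * (2 * a * c - 2 * b)) = 0 := by
    have := congrFun (congrArg WithLp.ofLp hp) 2
    simpa [hopfField, pt3, PiLp.smul_apply, PiLp.sub_apply] using this
  have e2' : b * (a ^ 2 + b ^ 2 + c ^ 2 + 1) = r * (2 * a * b + 2 * c) := by
    field_simp at e2; linarith [e2]
  have e3' : c * (a ^ 2 + b ^ 2 + c ^ 2 + 1) = r * (2 * a * c - 2 * b) := by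
    field_simp at e3; linarith [e3]
  have comb : (b ^ 2 + c ^ 2) * ((a - r) ^ 2 + b ^ 2 + c ^ 2 + (1 - r ^ 2)) = 0 := by
    linear_combination b * e2' + c * e3'
  have hpos : 0 < (a - r) ^ 2 + b ^ 2 + c ^ 2 + (1 - r ^ 2) := by
    nlinarith [sq_nonneg (a - r), sq_nonneg b, sq_nonneg c]
  have hbc : b ^ 2 + c ^ 2 = 0 := by
    rcases mul_eq_zero.mp comb with h | h
    · exact h
    · exact absurd h (ne_of_gt hpos)
  have hb2 : b ^ 2 = 0 := by nlinarith [sq_nonneg b, sq_nonneg c]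
  have hc2 : c ^ 2 = 0 := by nlinarith [sq_nonneg b, sq_nonneg c]
  have hb : b = 0 := by exact pow_eq_zero_iff (two_ne_zero) |>.mp hb2
  have hc : c = 0 := by exact pow_eq_zero_iff (two_ne_zero) |>.mp hc2
  have ha : (a ^ 2 + 1 : ℝ) ≠ 0 := by positivity
  ext i
  fin_cases i <;>
    simp [hopfField, pt3, PiLp.smul_apply, ← hA, ← hB, ← hC, hb, hc] <;>
    field_simp

lemma billiard_step (r : ℝ) (hr : r ^ 2 < 1) (y : ℝ) :
    billiard r (pt3 y 0 0) = pt3 (y + 2 * r) 0 0 := by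
  have hex : ∃ p, (fun p => p - r • hopfField p) p = pt3 y 0 0 := by
    refine ⟨pt3 (y + r) 0 0, ?_⟩
    show pt3 (y + r) 0 0 - r • hopfField (pt3 (y + r) 0 0) = pt3 y 0 0
    rw [hopf_axis]
    ext i
    fin_cases i <;> simp [pt3, PiLp.smul_apply, PiLp.sub_apply]
  have h1 := Function.invFun_eq hex
  have h2 := key r hr y _ h1
  unfold billiard
  rw [h2]
  ext i
  fin_cases i <;> simp [pt3, PiLp.smul_apply, PiLp.add_apply]

lemma pt3_norm (a : ℝ) : ‖pt3 a 0 0‖ = |a| := by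
  simp [pt3, EuclideanSpace.norm_eq, Fin.sum_univ_three, Real.sqrt_sq_eq_abs]

/-- For `0 < h < 1` and `r = √(1−h²)`, the billiard map satisfies
`B_h(x,0,0) = (x + 2r, 0, 0)`, hence `B_h^m(x,0,0) = (x + 2mr, 0, 0)` for all `m ∈ ℕ`, and the
orbit of `(x,0,0)` is unbounded. -/
theorem billiard_axis_orbit_unbounded (h : ℝ) (hh0 : 0 < h) (hh1 : h < 1) (x : ℝ) :
    billiard (Real.sqrt (1 - h ^ 2)) (pt3 x 0 0) =
      pt3 (x + 2 * Real.sqrt (1 - h ^ 2)) 0 0 ∧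
    (∀ m : ℕ, (billiard (Real.sqrt (1 - h ^ 2)))^[m] (pt3 x 0 0) =
      pt3 (x + 2 * m * Real.sqrt (1 - h ^ 2)) 0 0) ∧
    ¬ Bornology.IsBounded
        (Set.range fun m : ℕ => (billiard (Real.sqrt (1 - h ^ 2)))^[m] (pt3 x 0 0)) := by
  set r := Real.sqrt (1 - h ^ 2) with hrdef
  have h1h : (0:ℝ) < 1 - h ^ 2 := by nlinarith
  have hr2 : r ^ 2 = 1 - h ^ 2 := Real.sq_sqrt h1h.le
  have hrpos : 0 < r := Real.sqrt_pos.2 h1h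
  have hrlt : r ^ 2 < 1 := by nlinarith
  have hiter : ∀ m : ℕ, (billiard r)^[m] (pt3 x 0 0) = pt3 (x + 2 * m * r) 0 0 := by
    intro m
    induction m with
    | zero => simp
    | succ n ih =>
      rw [Function.iterate_succ_apply', ih, billiard_step r hrlt]
      congr 1
      push_cast
      ring
  refine ⟨by simpa using hiter 1, hiter, ?_⟩
  intro hb
  obtain ⟨C, hC⟩ := hb.exists_norm_le
  obtain ⟨m, hm⟩ := exists_nat_gt ((C - x) / (2 * r))
  have h1 : ‖pt3 (x + 2 * m * r) 0 0‖ ≤ C := by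
    rw [← hiter m]; exact hC _ (Set.mem_range_self m)
  rw [pt3_norm] at h1
  have h2 : x + 2 * m * r ≤ |x + 2 * m * r| := le_abs_self _
  have h3 : (C - x) / (2 * r) * (2 * r) < m * (2 * r) := by
    apply mul_lt_mul_of_pos_right hm (by positivity)
  rw [div_mul_cancel₀ _ (by positivity)] at h3
  linarith
end
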